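/- Let f be Lebesgue integrable over [c,d] and u : [a,b] → [c,d] be monotone and absolutely continuous. Then (f ∘ u) · u' is Lebesgue integrable over [a,b] and ∫_{u(α)}^{u(β)} f(x) dx = ∫_α^β f(u(t)) u'(t) dt for all α, β ∈ [a,b]. -/

import Mathlib

open MeasureTheory Set intervalIntegral

/-- `f` is absolutely continuous on `[a,b]` (standard ε–δ definition). -/
def AbsolutelyContinuousOn (f : ℝ → ℝ) (a b : ℝ) : Prop :=
  ∀ ε > (0:ℝ), ∃ δ > (0:ℝ), ∀ n : ℕ, ∀ x y : Fin n → ℝ,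
    (∀ i, a ≤ x i ∧ x i ≤ y i ∧ y i ≤ b) →
    (∀ i j, i ≠ j → Disjoint (Ioo (x i) (y i)) (Ioo (x j) (y j))) →
    ∑ i, (y i - x i) < δ → ∑ i, |f (y i) - f (x i)| < ε

open Filter Topology ENNReal
open scoped NNReal

noncomputable section CoV

namespace CoVAux

def clip (a b t : ℝ) : ℝ := max a (min t b)

lemma clip_mem {a b : ℝ} (hab : a ≤ b) (t : ℝ) : clip a b t ∈ Icc a b :=
  ⟨le_max_left _ _, max_le hab (min_le_right _ _)⟩

lemma clip_of_mem {a b t : ℝ} (ht : t ∈ Icc a b) : clip a b t = t := by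
  simp only [clip, min_eq_left ht.2, max_eq_right ht.1]

lemma clip_mono {a b : ℝ} : Monotone (clip a b) := fun s t hst =>
  max_le_max le_rfl (min_le_min_right _ hst)

lemma clip_lipschitz {a b s t : ℝ} (hst : s ≤ t) : clip a b t - clip a b s ≤ t - s := by
  simp only [clip]
  rcases le_total s b with h1 | h1
  · rcases le_total a s with h2 | h2
    · rw [min_eq_left h1, max_eq_right h2]
      exact sub_le_sub (max_le (h2.trans hst) (min_le_left _ _)) le_rfl
    · have h4 : max a (min s b) = a := max_eq_left (le_trans (min_le_left _ _) h2)
      rw [h4]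
      rcases le_total a (min t b) with h3 | h3
      · rw [max_eq_right h3]
        nlinarith [min_le_left t b]
      · rw [max_eq_left h3]; linarith
  · have h2 : min t b = b := min_eq_right (h1.trans hst)
    have h3 : min s b = b := min_eq_right h1
    rw [h2, h3]; linarith

lemma clip_dist {a b s t : ℝ} : |clip a b s - clip a b t| ≤ |s - t| := by
  rcases le_total t s with h | h
  · rw [abs_of_nonneg (sub_nonneg.2 (clip_mono (a := a) (b := b) h)),
      abs_of_nonneg (sub_nonneg.2 h)]
    exact clip_lipschitz (a := a) (b := b) h
  · rw [abs_of_nonpos (sub_nonpos.2 (clip_mono (a := a) (b := b) h)),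
      abs_of_nonpos (sub_nonpos.2 h)]
    linarith [clip_lipschitz (a := a) (b := b) h]

lemma clip_Ioo_subset {a b p q : ℝ} : Ioo (clip a b p) (clip a b q) ⊆ Ioo p q := by
  intro z hz
  obtain ⟨h1, h2⟩ := hz
  constructor
  · rcases le_total p b with hp | hp
    · calc p = min p b := (min_eq_left hp).symm
        _ ≤ clip a b p := le_max_right _ _
        _ < z := h1
    · exfalso
      have hbp : clip a b p = max a b := by rw [clip, min_eq_right hp]
      have hq : clip a b q ≤ max a b := max_le (le_max_left _ _)
        ((min_le_right _ _).trans (le_max_right _ _))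
      rw [hbp] at h1
      linarith [lt_of_lt_of_le h2 hq]
  · rcases le_total a q with hq | hq
    · have h5 : clip a b q ≤ q := max_le hq (min_le_left _ _)
      linarith
    · exfalso
      have hq2 : clip a b q = a := max_eq_left ((min_le_left _ _).trans hq)
      have hp2 : a ≤ clip a b p := le_max_left _ _
      rw [hq2] at h2
      linarith

section V

variable {v : ℝ → ℝ}

/-- The Stieltjes function associated to a monotone continuous function. -/
def SF (hm : Monotone v) (hc : Continuous v) : StieltjesFunction ℝ :=
  ⟨v, hm, fun x => (hc.continuousWithinAt)⟩

lemma leftLim_v (hc : Continuous v) (x : ℝ) : Function.leftLim v x = v x :=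
  leftLim_eq_of_tendsto
    ((hc.tendsto x).mono_left nhdsWithin_le_nhds)

variable (hm : Monotone v) (hc : Continuous v)

lemma SF_apply (x : ℝ) : SF hm hc x = v x := rfl

lemma SF_Ioc (s t : ℝ) : (SF hm hc).measure (Ioc s t) = ENNReal.ofReal (v t - v s) :=
  StieltjesFunction.measure_Ioc _ _ _

lemma SF_Icc (s t : ℝ) : (SF hm hc).measure (Icc s t) = ENNReal.ofReal (v t - v s) := by
  rw [StieltjesFunction.measure_Icc]
  congr 1
  rw [show Function.leftLim (SF hm hc) s = Function.leftLim v s from rfl, leftLim_v hc]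
  rfl

lemma SF_Ioo (s t : ℝ) : (SF hm hc).measure (Ioo s t) = ENNReal.ofReal (v t - v s) := by
  rw [StieltjesFunction.measure_Ioo]
  congr 1
  rw [show Function.leftLim (SF hm hc) t = Function.leftLim v t from rfl, leftLim_v hc]
  rfl

lemma SF_singleton (x : ℝ) : (SF hm hc).measure {x} = 0 := by
  rw [StieltjesFunction.measure_singleton,
    show Function.leftLim (SF hm hc) x = Function.leftLim v x from rfl, leftLim_v hc]
  simp [show (SF hm hc) x = v x from rfl]

variable {a b : ℝ}

lemma tendsto_bot (hconst : ∀ t, v (clip a b t) = v t) (hab : a ≤ b) : Tendsto v atBot (𝓝 (v a)) := by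
  apply Tendsto.congr' _ (tendsto_const_nhds (α := ℝ) (x := v a))
  filter_upwards [eventually_le_atBot a] with t ht
  rw [← hconst t, clip, min_eq_left (ht.trans hab), max_eq_left ht]

lemma tendsto_top (hconst : ∀ t, v (clip a b t) = v t) (hab : a ≤ b) : Tendsto v atTop (𝓝 (v b)) := by
  apply Tendsto.congr' _ (tendsto_const_nhds (α := ℝ) (x := v b))
  filter_upwards [eventually_ge_atTop b] with t ht
  rw [← hconst t, clip, min_eq_right ht, max_eq_right hab]

lemma SF_finite (hconst : ∀ t, v (clip a b t) = v t) (hab : a ≤ b) : IsFiniteMeasure (SF hm hc).measure := by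
  constructor
  rw [(SF hm hc).measure_univ (l := v a) (u := v b) (tendsto_bot hconst hab)
    (tendsto_top hconst hab)]
  exact ofReal_lt_top

lemma SF_compl_null (hconst : ∀ t, v (clip a b t) = v t) (hab : a ≤ b) :
    (SF hm hc).measure ((Icc a b)ᶜ) = 0 := by
  have hsub : (Icc a b)ᶜ ⊆ Iio a ∪ Ioi b := by
    intro z hz
    simp only [mem_compl_iff, mem_Icc, not_and_or, not_le] at hz
    simpa using hz
  refine le_antisymm (le_trans (measure_mono hsub) (le_trans (measure_union_le _ _) ?_)) zero_le
  have h1 : (SF hm hc).measure (Iio a) = 0 := by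
    refine le_antisymm (le_trans (measure_mono Iio_subset_Iic_self) ?_) zero_le
    rw [StieltjesFunction.measure_Iic _ (tendsto_bot hconst hab)]
    simp [SF_apply]
  have h2 : (SF hm hc).measure (Ioi b) = 0 := by
    refine le_antisymm (le_trans (measure_mono Ioi_subset_Ici_self) ?_) zero_le
    rw [StieltjesFunction.measure_Ici _ (tendsto_top hconst hab),
      show Function.leftLim (SF hm hc) b = Function.leftLim v b from rfl, leftLim_v hc]
    simp [SF_apply]
  simp [h1, h2]

end V

lemma isOpen_ordConnected_eq_Ioo {C : Set ℝ} (hC : IsOpen C) (hconn : C.OrdConnected)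
    (hne : C.Nonempty) (hbb : BddBelow C) (hba : BddAbove C) :
    C = Ioo (sInf C) (sSup C) := by
  apply Subset.antisymm
  · intro z hz
    constructor
    · rcases lt_or_eq_of_le (csInf_le hbb hz) with h | h
      · exact h
      · exfalso
        obtain ⟨ε, hε, hball⟩ := Metric.isOpen_iff.1 hC z hz
        have hmem : z - ε / 2 ∈ C := by
          apply hball
          rw [Metric.mem_ball, Real.dist_eq, abs_of_nonpos (by linarith)]
          linarith
        have := csInf_le hbb hmem
        rw [h] at this
        linarith
    · rcases lt_or_eq_of_le (le_csSup hba hz) with h | h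
      · exact h
      · exfalso
        obtain ⟨ε, hε, hball⟩ := Metric.isOpen_iff.1 hC z hz
        have hmem : z + ε / 2 ∈ C := by
          apply hball
          rw [Metric.mem_ball, Real.dist_eq, abs_of_nonneg (by linarith)]
          linarith
        have := le_csSup hba hmem
        rw [← h] at this
        linarith
  · intro z hz
    obtain ⟨z1, hz1C, hz1lt⟩ := exists_lt_of_csInf_lt hne hz.1
    obtain ⟨z2, hz2C, hz2lt⟩ := exists_lt_of_lt_csSup hne hz.2
    exact hconn.out hz1C hz2C ⟨hz1lt.le, hz2lt.le⟩

section AC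

variable {v : ℝ → ℝ} {a b : ℝ}

/-- Core estimate: a compact subset of a small open set has small Stieltjes measure. -/
lemma compact_estimate (hm : Monotone v) (hc : Continuous v) (hab : a ≤ b)
    (hconst : ∀ t, v (clip a b t) = v t)
    {ε δ : ℝ} (hε : 0 < ε) (hδ : 0 < δ)
    (hACδ : ∀ n : ℕ, ∀ x y : Fin n → ℝ,
      (∀ i, a ≤ x i ∧ x i ≤ y i ∧ y i ≤ b) →
      (∀ i j, i ≠ j → Disjoint (Ioo (x i) (y i)) (Ioo (x j) (y j))) →
      ∑ i, (y i - x i) < δ → ∑ i, |v (y i) - v (x i)| < ε)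
    {U K : Set ℝ} (hUopen : IsOpen U) (hUsub : U ⊆ Ioo (a - 1) (b + 1))
    (hUvol : volume U < ENNReal.ofReal δ)
    (hK : IsCompact K) (hKU : K ⊆ U) :
    (SF hm hc).measure K ≤ ENNReal.ofReal ε := by
  classical
  have hcover : K ⊆ ⋃ x ∈ K, connectedComponentIn U x := fun x hx =>
    mem_biUnion hx (mem_connectedComponentIn (hKU hx))
  obtain ⟨t, htK, htfin, htcover⟩ :=
    hK.elim_finite_subcover_image (fun x _ => hUopen.connectedComponentIn) hcover
  -- each component is an open interval
  have hCsub : ∀ x ∈ t, connectedComponentIn U x ⊆ Ioo (a - 1) (b + 1) := fun x _ =>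
    (connectedComponentIn_subset U x).trans hUsub
  have hCI : ∀ x ∈ t, connectedComponentIn U x
      = Ioo (sInf (connectedComponentIn U x)) (sSup (connectedComponentIn U x)) := by
    intro x hx
    refine isOpen_ordConnected_eq_Ioo hUopen.connectedComponentIn
      ((isConnected_connectedComponentIn_iff.2 (hKU (htK hx))).isPreconnected.ordConnected)
      ⟨x, mem_connectedComponentIn (hKU (htK hx))⟩
      (BddBelow.mono (hCsub x hx) bddBelow_Ioo)
      (BddAbove.mono (hCsub x hx) bddAbove_Ioo)
  set g : ℝ → ℝ × ℝ := fun x =>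
    (sInf (connectedComponentIn U x), sSup (connectedComponentIn U x)) with hg
  set F : Finset (ℝ × ℝ) := htfin.toFinset.image g with hF
  set n := F.card with hn
  set e : Fin n → ℝ × ℝ := fun i => (F.equivFin.symm i : ℝ × ℝ) with he
  have heF : ∀ i, e i ∈ F := fun i => (F.equivFin.symm i).2
  have heinj : Function.Injective e := fun i j hij => by
    have := F.equivFin.symm.injective (Subtype.ext hij)
    exact this
  have hFmem : ∀ pr ∈ F, ∃ x ∈ t, g x = pr ∧ connectedComponentIn U x = Ioo pr.1 pr.2 := by
    intro pr hpr
    rw [hF, Finset.mem_image] at hpr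
    obtain ⟨x, hx, hgx⟩ := hpr
    rw [Set.Finite.mem_toFinset] at hx
    exact ⟨x, hx, hgx, by rw [← hgx]; exact hCI x hx⟩
  have hdisj : ∀ pr ∈ F, ∀ pr' ∈ F, pr ≠ pr' →
      Disjoint (Ioo pr.1 pr.2) (Ioo pr'.1 pr'.2) := by
    intro pr hpr pr' hpr' hne
    obtain ⟨x, hx, hgx, hCx⟩ := hFmem pr hpr
    obtain ⟨x', hx', hgx', hCx'⟩ := hFmem pr' hpr'
    rw [← hCx, ← hCx']
    by_contra hnd
    obtain ⟨z, hz1, hz2⟩ := Set.not_disjoint_iff.1 hnd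
    have h1 := connectedComponentIn_eq hz1
    have h2 := connectedComponentIn_eq hz2
    apply hne
    rw [← hgx, ← hgx', hg]
    simp only
    rw [h1.trans h2.symm]
  -- the components, as indexed intervals
  set P : Fin n → ℝ := fun i => (e i).1 with hP
  set Q : Fin n → ℝ := fun i => (e i).2 with hQ
  have hIooC : ∀ i, ∃ x ∈ t, connectedComponentIn U x = Ioo (P i) (Q i) := by
    intro i
    obtain ⟨x, hx, hgx, hCx⟩ := hFmem (e i) (heF i)
    exact ⟨x, hx, hCx⟩
  have hPQ : ∀ i, P i < Q i := by
    intro i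
    obtain ⟨x, hx, hCx⟩ := hIooC i
    have : (connectedComponentIn U x).Nonempty := ⟨x, mem_connectedComponentIn (hKU (htK hx))⟩
    rw [hCx] at this
    exact nonempty_Ioo.1 this
  have hIooU : ∀ i, Ioo (P i) (Q i) ⊆ U := by
    intro i
    obtain ⟨x, hx, hCx⟩ := hIooC i
    rw [← hCx]
    exact connectedComponentIn_subset U x
  have hIoodisj : Pairwise (Function.onFun Disjoint fun i => Ioo (P i) (Q i)) := by
    intro i j hij
    exact hdisj _ (heF i) _ (heF j) (fun h => hij (heinj h))
  -- length estimate
  have hsumlen : ∑ i, (Q i - P i) < δ := by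
    have hv : volume (⋃ i, Ioo (P i) (Q i)) = ∑ i, volume (Ioo (P i) (Q i)) := by
      rw [measure_iUnion hIoodisj fun i => measurableSet_Ioo, tsum_fintype]
    have hle : volume (⋃ i, Ioo (P i) (Q i)) < ENNReal.ofReal δ :=
      lt_of_le_of_lt (measure_mono (iUnion_subset hIooU)) hUvol
    rw [hv] at hle
    have : ENNReal.ofReal (∑ i, (Q i - P i)) < ENNReal.ofReal δ := by
      rw [ENNReal.ofReal_sum_of_nonneg fun i _ => sub_nonneg.2 (hPQ i).le]
      simpa [Real.volume_Ioo] using hle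
    exact (ENNReal.ofReal_lt_ofReal_iff hδ).1 this
  -- apply absolute continuity
  set X : Fin n → ℝ := fun i => clip a b (P i) with hX
  set Y : Fin n → ℝ := fun i => clip a b (Q i) with hY
  have hXY : ∀ i, a ≤ X i ∧ X i ≤ Y i ∧ Y i ≤ b := fun i =>
    ⟨(clip_mem hab _).1, clip_mono (hPQ i).le, (clip_mem hab _).2⟩
  have hXYdisj : ∀ i j, i ≠ j → Disjoint (Ioo (X i) (Y i)) (Ioo (X j) (Y j)) := by
    intro i j hij
    exact ((hIoodisj hij).mono clip_Ioo_subset clip_Ioo_subset)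
  have hXYsum : ∑ i, (Y i - X i) < δ :=
    lt_of_le_of_lt (Finset.sum_le_sum fun i _ => clip_lipschitz (hPQ i).le) hsumlen
  have hsmall := hACδ n X Y hXY hXYdisj hXYsum
  -- measure estimate
  calc (SF hm hc).measure K ≤ (SF hm hc).measure (⋃ i, Ioo (P i) (Q i)) := by
        apply measure_mono
        refine htcover.trans (iUnion₂_subset fun x hx => ?_)
        have hgF : g x ∈ F := by
          rw [hF, Finset.mem_image]
          exact ⟨x, (Set.Finite.mem_toFinset htfin).2 hx, rfl⟩
        refine subset_iUnion_of_subset (F.equivFin ⟨g x, hgF⟩) ?_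
        have hex : e (F.equivFin ⟨g x, hgF⟩) = g x := by
          rw [he]
          simp
        rw [hCI x hx]
        intro z hz
        have h1 : (g x).1 = sInf (connectedComponentIn U x) := rfl
        have h2 : (g x).2 = sSup (connectedComponentIn U x) := rfl
        rw [hP, hQ]
        simp only [hex]
        rw [← h1, ← h2] at hz
        exact hz
    _ ≤ ∑ i, (SF hm hc).measure (Ioo (P i) (Q i)) := measure_iUnion_fintype_le _ _
    _ = ∑ i, ENNReal.ofReal (v (Y i) - v (X i)) := by
        refine Finset.sum_congr rfl fun i _ => ?_
        rw [SF_Ioo, hX, hY]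
        simp only [hconst]
    _ ≤ ENNReal.ofReal ε := by
        rw [← ENNReal.ofReal_sum_of_nonneg fun i _ =>
          sub_nonneg.2 (hm (clip_mono (hPQ i).le))]
        refine ENNReal.ofReal_le_ofReal (le_trans (Finset.sum_le_sum fun i _ => le_abs_self _)
          hsmall.le)

/-- Absolute continuity of the Stieltjes measure w.r.t. Lebesgue, from ε-δ absolute
continuity of the function. -/
lemma SF_absolutelyContinuous (hm : Monotone v) (hc : Continuous v) (hab : a ≤ b)
    (hconst : ∀ t, v (clip a b t) = v t)
    (hAC : ∀ ε > (0:ℝ), ∃ δ > (0:ℝ), ∀ n : ℕ, ∀ x y : Fin n → ℝ,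
      (∀ i, a ≤ x i ∧ x i ≤ y i ∧ y i ≤ b) →
      (∀ i j, i ≠ j → Disjoint (Ioo (x i) (y i)) (Ioo (x j) (y j))) →
      ∑ i, (y i - x i) < δ → ∑ i, |v (y i) - v (x i)| < ε) :
    (SF hm hc).measure ≪ volume := by
  refine Measure.AbsolutelyContinuous.mk fun s hs hvol => ?_
  have key : ∀ ε : ℝ, 0 < ε → (SF hm hc).measure s ≤ ENNReal.ofReal ε := by
    intro ε hε
    obtain ⟨δ, hδ, hACδ⟩ := hAC ε hε
    have hsub : (SF hm hc).measure s ≤ (SF hm hc).measure (s ∩ Icc a b) := by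
      calc (SF hm hc).measure s ≤ (SF hm hc).measure ((s ∩ Icc a b) ∪ (Icc a b)ᶜ) := by
            apply measure_mono
            intro z hz
            by_cases h : z ∈ Icc a b
            · exact Or.inl ⟨hz, h⟩
            · exact Or.inr h
        _ ≤ (SF hm hc).measure (s ∩ Icc a b) + (SF hm hc).measure ((Icc a b)ᶜ) :=
            measure_union_le _ _
        _ = (SF hm hc).measure (s ∩ Icc a b) := by
            rw [SF_compl_null hm hc hconst hab, add_zero]
    have hvol' : volume (s ∩ Icc a b) < ENNReal.ofReal δ := by
      rw [measure_mono_null inter_subset_left hvol]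
      exact ENNReal.ofReal_pos.2 hδ
    obtain ⟨U, hsU, hUopen, hUvol⟩ :=
      Set.exists_isOpen_lt_of_lt (s ∩ Icc a b) (ENNReal.ofReal δ) hvol'
    set U' := U ∩ Ioo (a - 1) (b + 1) with hU'
    have hU'open : IsOpen U' := hUopen.inter isOpen_Ioo
    have hsU' : s ∩ Icc a b ⊆ U' := fun z hz =>
      ⟨hsU hz, ⟨by linarith [hz.2.1], by linarith [hz.2.2]⟩⟩
    have hU'vol : volume U' < ENNReal.ofReal δ :=
      lt_of_le_of_lt (measure_mono inter_subset_left) hUvol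
    refine hsub.trans ((measure_mono hsU').trans ?_)
    by_contra hgt
    push_neg at hgt
    obtain ⟨K, hKU, hKcomp, hKgt⟩ := hU'open.exists_lt_isCompact hgt
    exact absurd (compact_estimate hm hc hab hconst hε hδ hACδ hU'open
      inter_subset_right hU'vol hKcomp hKU) (not_le.2 hKgt)
  by_contra hne
  have hpos : 0 < (SF hm hc).measure s := pos_iff_ne_zero.2 hne
  haveI := SF_finite hm hc hconst hab
  have hlt : ((SF hm hc).measure s).toReal / 2 < ((SF hm hc).measure s).toReal := by
    have : 0 < ((SF hm hc).measure s).toReal :=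
      ENNReal.toReal_pos hne (measure_ne_top _ _)
    linarith
  have h2 : 0 < ((SF hm hc).measure s).toReal / 2 := by
    have : 0 < ((SF hm hc).measure s).toReal :=
      ENNReal.toReal_pos hne (measure_ne_top _ _)
    linarith
  have hkey := key _ h2
  have hle := ENNReal.toReal_mono ENNReal.ofReal_ne_top hkey
  rw [ENNReal.toReal_ofReal h2.le] at hle
  linarith

end AC

section Map

variable {v : ℝ → ℝ}

lemma volume_Ioc_inter_Icc {s t A B m M : ℝ} (hmM : m = max s A) (hMm : M = min t B) :
    volume (Ioc s t ∩ Icc A B) = ENNReal.ofReal (M - m) := by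
  have h1 : Ioo m M ⊆ Ioc s t ∩ Icc A B := by
    intro y hy
    obtain ⟨hy1, hy2⟩ := hy
    rw [hmM] at hy1
    rw [hMm] at hy2
    exact ⟨⟨lt_of_le_of_lt (le_max_left _ _) hy1, (hy2.trans_le (min_le_left _ _)).le⟩,
      ⟨(le_max_right s A).trans hy1.le, (hy2.trans_le (min_le_right _ _)).le⟩⟩
  have h2 : Ioc s t ∩ Icc A B ⊆ Icc m M := by
    intro y hy
    obtain ⟨⟨hy1, hy2⟩, ⟨hy3, hy4⟩⟩ := hy
    exact ⟨hmM ▸ max_le hy1.le hy3, hMm ▸ le_min hy2 hy4⟩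
  refine le_antisymm ?_ ?_
  · exact le_trans (measure_mono h2) (by rw [Real.volume_Icc])
  · exact le_trans (by rw [Real.volume_Ioo]) (measure_mono h1)

lemma SF_preimage_Ioc (hm : Monotone v) (hc : Continuous v) {α β : ℝ} (hαβ : α ≤ β)
    (s t : ℝ) :
    (SF hm hc).measure (v ⁻¹' (Ioc s t) ∩ Icc α β) = volume (Ioc s t ∩ Icc (v α) (v β)) := by
  set T := v ⁻¹' (Ioc s t) ∩ Icc α β with hT
  rcases eq_empty_or_nonempty T with hTe | hne
  · have hempty : Ioc s t ∩ Icc (v α) (v β) = ∅ := by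
      rw [eq_empty_iff_forall_notMem]
      intro y hy
      obtain ⟨x, hx, hvx⟩ := intermediate_value_Icc hαβ hc.continuousOn hy.2
      have : x ∈ T := ⟨by rw [mem_preimage, hvx]; exact hy.1, hx⟩
      rw [hTe] at this
      exact this
    rw [hTe, hempty]
    simp
  · have hbdd_b : BddBelow T := BddBelow.mono inter_subset_right bddBelow_Icc
    have hbdd_a : BddAbove T := BddAbove.mono inter_subset_right bddAbove_Icc
    set ι := sInf T with hι
    set q := sSup T with hq
    obtain ⟨z0, hz0⟩ := id hne
    have hιmem : α ≤ ι ∧ ι ≤ β :=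
      ⟨le_csInf hne fun z hz => hz.2.1, (csInf_le hbdd_b hz0).trans hz0.2.2⟩
    have hqmem : α ≤ q ∧ q ≤ β :=
      ⟨hz0.2.1.trans (le_csSup hbdd_a hz0), csSup_le hne fun z hz => hz.2.2⟩
    have hιq : ι ≤ q := (csInf_le hbdd_b hz0).trans (le_csSup hbdd_a hz0)
    have hTsub : T ⊆ Icc ι q := fun z hz => ⟨csInf_le hbdd_b hz, le_csSup hbdd_a hz⟩
    have hsubT : Ioo ι q ⊆ T := by
      intro z hz
      obtain ⟨y1, hy1T, hy1⟩ := exists_lt_of_csInf_lt hne hz.1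
      obtain ⟨y2, hy2T, hy2⟩ := exists_lt_of_lt_csSup hne hz.2
      refine ⟨⟨lt_of_lt_of_le hy1T.1.1 (hm hy1.le), le_trans (hm hy2.le) hy2T.1.2⟩,
        ⟨hy1T.2.1.trans hy1.le, hy2.le.trans hy2T.2.2⟩⟩
    have hμT : (SF hm hc).measure T = ENNReal.ofReal (v q - v ι) := by
      refine le_antisymm ?_ ?_
      · rw [← SF_Icc hm hc]
        exact measure_mono hTsub
      · rw [← SF_Ioo hm hc]
        exact measure_mono hsubT
    have himg : ∀ z ∈ T, v z ∈ Icc s t := fun z hz => Ioc_subset_Icc_self hz.1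
    have hclosure : ∀ {w : ℝ}, w ∈ closure T → v w ∈ Icc s t := by
      intro w hw
      have h1 : v w ∈ closure (v '' T) :=
        (image_closure_subset_closure_image hc) (mem_image_of_mem v hw)
      have h2 : closure (v '' T) ⊆ Icc s t := by
        apply closure_minimal _ isClosed_Icc
        rintro y ⟨z, hz, hvz⟩
        exact hvz ▸ himg z hz
      exact h2 h1
    have hvq_mem : v q ∈ Icc s t := hclosure (csSup_mem_closure hne hbdd_a)
    have hvι_mem : v ι ∈ Icc s t := hclosure (csInf_mem_closure hne hbdd_b)
    have hvq : v q = min t (v β) := by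
      rcases le_or_gt (v β) t with hβt | hβt
      · have hβT : β ∈ T :=
          ⟨⟨lt_of_lt_of_le hz0.1.1 (hm hz0.2.2), hβt⟩, ⟨hαβ, le_rfl⟩⟩
        have hqβ : q = β := le_antisymm hqmem.2 (le_csSup hbdd_a hβT)
        rw [hqβ, min_eq_right hβt]
      · have hqβ : q < β := by
          rcases lt_or_eq_of_le hqmem.2 with h | h
          · exact h
          · exfalso
            rw [h] at hvq_mem
            exact absurd hβt (not_lt.2 hvq_mem.2)
        have hsub2 : ∀ x ∈ Ioc q β, t ≤ v x := by
          intro x hx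
          have hxT : x ∉ T := fun hxT => absurd (le_csSup hbdd_a hxT) (not_le.2 hx.1)
          have hxI : x ∈ Icc α β := ⟨hιmem.1.trans (hιq.trans hx.1.le), hx.2⟩
          have hsx : s < v x :=
            lt_of_lt_of_le hz0.1.1 (hm ((le_csSup hbdd_a hz0).trans hx.1.le))
          by_contra hxt
          exact hxT ⟨⟨hsx, (not_le.1 hxt).le⟩, hxI⟩
        have hcl : t ≤ v q := by
          have hqcl : q ∈ closure (Ioc q β) := by
            rw [closure_Ioc (ne_of_lt hqβ)]
            exact ⟨le_rfl, hqβ.le⟩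
          have h1 : v q ∈ closure (v '' Ioc q β) :=
            (image_closure_subset_closure_image hc) (mem_image_of_mem v hqcl)
          have h2 : closure (v '' Ioc q β) ⊆ Ici t := by
            apply closure_minimal _ isClosed_Ici
            rintro y ⟨z, hz, hvz⟩
            exact hvz ▸ hsub2 z hz
          exact h2 h1
        rw [min_eq_left hβt.le]
        exact le_antisymm hvq_mem.2 hcl
    have hvι : v ι = max s (v α) := by
      rcases le_or_gt s (v α) with hαs | hαs
      · rcases eq_or_lt_of_le hαs with heq | hαs'
        · -- v α = s : then both routes give v ι = s
          rw [max_eq_right hαs]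
          rcases eq_or_lt_of_le hιmem.1 with hαι | hαι
          · rw [← hαι]
          · have hsub2 : ∀ x ∈ Ico α ι, v x ≤ s := by
              intro x hx
              have hxT : x ∉ T := fun hxT => absurd (csInf_le hbdd_b hxT) (not_le.2 hx.2)
              have hxI : x ∈ Icc α β := ⟨hx.1, hx.2.le.trans hιmem.2⟩
              have hxt : v x ≤ t := (hm hx.2.le).trans hvι_mem.2
              by_contra hxs
              exact hxT ⟨⟨not_le.1 hxs, hxt⟩, hxI⟩
            have hcl : v ι ≤ s := by
              have hιcl : ι ∈ closure (Ico α ι) := by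
                rw [closure_Ico (ne_of_lt hαι)]
                exact ⟨hαι.le, le_rfl⟩
              have h1 : v ι ∈ closure (v '' Ico α ι) :=
                (image_closure_subset_closure_image hc) (mem_image_of_mem v hιcl)
              have h2 : closure (v '' Ico α ι) ⊆ Iic s := by
                apply closure_minimal _ isClosed_Iic
                rintro y ⟨z, hz, hvz⟩
                exact hvz ▸ hsub2 z hz
              exact h2 h1
            exact le_antisymm (heq ▸ hcl) (hm hιmem.1)
        · -- s < v α : ι = α
          have hαT : α ∈ T :=
            ⟨⟨hαs', (hm hz0.2.1).trans hz0.1.2⟩, ⟨le_rfl, hαβ⟩⟩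
          have hια : ι = α := le_antisymm (csInf_le hbdd_b hαT) hιmem.1
          rw [hια, max_eq_right hαs]
      ·
        rw [max_eq_left hαs.le]
        rcases eq_or_lt_of_le hιmem.1 with hαι | hαι
        · -- ι = α: v ι = v α < s but also s ≤ v ι, contradiction
          exfalso
          rw [hαι] at hαs
          exact absurd hvι_mem.1 (not_le.2 hαs)
        · have hsub2 : ∀ x ∈ Ico α ι, v x ≤ s := by
            intro x hx
            have hxT : x ∉ T := fun hxT => absurd (csInf_le hbdd_b hxT) (not_le.2 hx.2)
            have hxI : x ∈ Icc α β := ⟨hx.1, hx.2.le.trans hιmem.2⟩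
            have hxt : v x ≤ t := (hm hx.2.le).trans hvι_mem.2
            by_contra hxs
            exact hxT ⟨⟨not_le.1 hxs, hxt⟩, hxI⟩
          have hcl : v ι ≤ s := by
            have hιcl : ι ∈ closure (Ico α ι) := by
              rw [closure_Ico (ne_of_lt hαι)]
              exact ⟨hαι.le, le_rfl⟩
            have h1 : v ι ∈ closure (v '' Ico α ι) :=
              (image_closure_subset_closure_image hc) (mem_image_of_mem v hιcl)
            have h2 : closure (v '' Ico α ι) ⊆ Iic s := by
              apply closure_minimal _ isClosed_Iic
              rintro y ⟨z, hz, hvz⟩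
              exact hvz ▸ hsub2 z hz
            exact h2 h1
          exact le_antisymm hcl hvι_mem.1
    rw [hμT, hvq, hvι, volume_Ioc_inter_Icc rfl rfl]

/-- The pushforward of the restricted Stieltjes measure under `v` is Lebesgue measure on the
image interval. -/
lemma SF_map (hm : Monotone v) (hc : Continuous v) {α β : ℝ} (hαβ : α ≤ β) :
    Measure.map v ((SF hm hc).measure.restrict (Icc α β))
      = volume.restrict (Icc (v α) (v β)) := by
  haveI hfin : IsFiniteMeasure ((SF hm hc).measure.restrict (Icc α β)) := by
    constructor
    rw [Measure.restrict_apply_univ, SF_Icc hm hc]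
    exact ENNReal.ofReal_lt_top
  refine Measure.ext_of_Ioc_finite _ _ ?_ fun s t hst => ?_
  · rw [Measure.map_apply hc.measurable MeasurableSet.univ, preimage_univ,
      Measure.restrict_apply_univ, Measure.restrict_apply_univ, SF_Icc hm hc,
      Real.volume_Icc]
  · rw [Measure.map_apply hc.measurable measurableSet_Ioc,
      Measure.restrict_apply (hc.measurable measurableSet_Ioc),
      Measure.restrict_apply measurableSet_Ioc]
    exact SF_preimage_Ioc hm hc hαβ s t

end Map

section Main

theorem main_mono (a b c d : ℝ) (f u u' : ℝ → ℝ) (hab : a ≤ b)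
    (hf : IntegrableOn f (Icc c d) volume)
    (hmaps : MapsTo u (Icc a b) (Icc c d))
    (hmono : MonotoneOn u (Icc a b))
    (hAC : AbsolutelyContinuousOn u a b)
    (hu : ∀ᵐ t ∂(volume.restrict (Icc a b)), HasDerivWithinAt u (u' t) (Icc a b) t) :
    IntegrableOn (fun t => f (u t) * u' t) (Icc a b) volume ∧
      ∀ α ∈ Icc a b, ∀ β ∈ Icc a b,
        (∫ x in u α..u β, f x) = ∫ t in α..β, f (u t) * u' t := by
  classical
  -- uniform continuity from absolute continuity
  have hucont : ∀ ε > (0:ℝ), ∃ δ > (0:ℝ), ∀ x y : ℝ, x ∈ Icc a b → y ∈ Icc a b → x ≤ y →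
      y - x < δ → |u y - u x| < ε := by
    intro ε hε
    obtain ⟨δ, hδ, hACδ⟩ := hAC ε hε
    refine ⟨δ, hδ, fun x y hx hy hxy hlt => ?_⟩
    have := hACδ 1 (fun _ => x) (fun _ => y) (fun _ => ⟨hx.1, hxy, hy.2⟩)
      (fun i j hij => absurd (Subsingleton.elim i j) hij) (by simpa using hlt)
    simpa using this
  -- the extended function
  set v : ℝ → ℝ := fun t => u (clip a b t) with hv
  have hveq : ∀ t ∈ Icc a b, v t = u t := fun t ht => by
    rw [hv]; simp only; rw [clip_of_mem ht]
  have hvconst : ∀ t, v (clip a b t) = v t := fun t => by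
    rw [hv]; simp only; rw [clip_of_mem (clip_mem hab t)]
  have hvmono : Monotone v := fun s t h =>
    hmono (clip_mem hab _) (clip_mem hab _) (clip_mono h)
  have hvcont : Continuous v := by
    rw [Metric.continuous_iff]
    intro x ε hε
    obtain ⟨δ, hδ, hδ'⟩ := hucont ε hε
    refine ⟨δ, hδ, fun y hy => ?_⟩
    rw [Real.dist_eq] at hy ⊢
    have hd : |clip a b y - clip a b x| < δ := lt_of_le_of_lt clip_dist hy
    rcases le_total (clip a b x) (clip a b y) with h | h
    · have := hδ' _ _ (clip_mem hab x) (clip_mem hab y) h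
        (lt_of_le_of_lt (le_abs_self _) hd)
      simpa using this
    · have := hδ' _ _ (clip_mem hab y) (clip_mem hab x) h
        (lt_of_le_of_lt (le_abs_self _) (by rwa [abs_sub_comm] at hd))
      rw [abs_sub_comm]
      simpa using this
  -- Stieltjes measure
  haveI hfinμ : IsFiniteMeasure (SF hvmono hvcont).measure :=
    SF_finite hvmono hvcont hvconst hab
  set μ := (SF hvmono hvcont).measure with hμ
  have hac : μ ≪ volume := by
    refine SF_absolutelyContinuous hvmono hvcont hab hvconst ?_
    intro ε hε
    obtain ⟨δ, hδ, hACδ⟩ := hAC ε hε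
    refine ⟨δ, hδ, fun n x y hxy hdis hsum => ?_⟩
    have h := hACδ n x y hxy hdis hsum
    refine lt_of_le_of_lt (le_of_eq (Finset.sum_congr rfl fun i _ => ?_)) h
    rw [hveq _ ⟨((hxy i).1.trans (hxy i).2.1), (hxy i).2.2⟩,
      hveq _ ⟨(hxy i).1, ((hxy i).2.1.trans (hxy i).2.2)⟩]
  set w := μ.rnDeriv volume with hw
  have hwmeas : Measurable w := Measure.measurable_rnDeriv μ volume
  have hwfin : ∀ᵐ x, w x < ⊤ := Measure.rnDeriv_lt_top μ volume
  have hwd : volume.withDensity w = μ := Measure.withDensity_rnDeriv_eq μ volume hac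
  have hderiv : ∀ᵐ x, HasDerivAt v (w x).toReal x := (SF hvmono hvcont).ae_hasDerivAt
  -- identify u' with the RN derivative a.e. on [a,b]
  have hae : ∀ᵐ t ∂(volume.restrict (Icc a b)), u' t = (w t).toReal := by
    have h4 : ∀ᵐ t ∂(volume.restrict (Icc a b)), t ∉ ({a, b} : Set ℝ) := by
      have hz : volume.restrict (Icc a b) ({a, b} : Set ℝ) = 0 :=
        le_antisymm (le_trans (Measure.restrict_le_self _)
          (le_of_eq (Set.Countable.measure_zero ((countable_singleton b).insert a) _)))
          zero_le
      exact measure_eq_zero_iff_ae_notMem.mp hz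
    filter_upwards [hu, ae_restrict_of_ae hderiv, ae_restrict_mem measurableSet_Icc, h4]
      with t h1t h2t h3t h4t
    have hIoo : t ∈ Ioo a b := by
      rcases eq_or_lt_of_le h3t.1 with h | h
      · exact absurd (by simp [← h] : t ∈ ({a, b} : Set ℝ)) h4t
      rcases eq_or_lt_of_le h3t.2 with h' | h'
      · exact absurd (by simp [h'] : t ∈ ({a, b} : Set ℝ)) h4t
      · exact ⟨h, h'⟩
    have hanb : a < b := lt_trans hIoo.1 hIoo.2
    have hueq : u =ᶠ[𝓝 t] v := by
      filter_upwards [Icc_mem_nhds hIoo.1 hIoo.2] with s hs using (hveq s hs).symm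
    have h2t' : HasDerivAt u (w t).toReal t := h2t.congr_of_eventuallyEq hueq
    have hud := uniqueDiffOn_Icc hanb t h3t
    rw [← h1t.derivWithin hud, (h2t'.hasDerivWithinAt).derivWithin hud]
  -- density form of μ restricted
  set w0 : ℝ → ℝ≥0 := fun t => (w t).toNNReal with hw0
  have hw0meas : Measurable w0 := hwmeas.ennreal_toNNReal
  have hw0coe : ∀ᵐ t ∂(volume : Measure ℝ), ((w0 t : ℝ≥0) : ℝ≥0∞) = w t := by
    filter_upwards [hwfin] with t ht using ENNReal.coe_toNNReal ht.ne
  have hwd0 : ∀ s : Set ℝ, MeasurableSet s →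
      (volume.restrict s).withDensity (fun t => ((w0 t : ℝ≥0) : ℝ≥0∞)) = μ.restrict s := by
    intro s hs
    rw [← hwd, restrict_withDensity hs]
    exact withDensity_congr_ae (ae_restrict_of_ae hw0coe)
  have hsubIcc : ∀ {α β : ℝ}, α ∈ Icc a b → β ∈ Icc a b → Icc α β ⊆ Icc a b :=
    fun hα hβ => Icc_subset_Icc hα.1 hβ.2
  -- key computation on ordered closed intervals
  have hkey : ∀ α ∈ Icc a b, ∀ β ∈ Icc a b, α ≤ β →
      ((∫ x in Icc (v α) (v β), f x) = ∫ t in Icc α β, f (u t) * u' t)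
      ∧ IntegrableOn (fun t => f (u t) * u' t) (Icc α β) volume := by
    intro α hα β hβ hαβ
    have hfint : IntegrableOn f (Icc (v α) (v β)) volume := by
      refine hf.mono_set ?_
      rw [hveq α hα, hveq β hβ]
      exact Icc_subset_Icc (hmaps hα).1 (hmaps hβ).2
    have hmap : Measure.map v (μ.restrict (Icc α β)) = volume.restrict (Icc (v α) (v β)) :=
      SF_map hvmono hvcont hαβ
    have hfi : Integrable f (Measure.map v (μ.restrict (Icc α β))) := by
      rw [hmap]; exact hfint
    have hcomp : Integrable (fun t => f (v t)) (μ.restrict (Icc α β)) :=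
      (integrable_map_measure hfi.aestronglyMeasurable hvcont.measurable.aemeasurable).1 hfi
    have hae' : ∀ᵐ t ∂(volume.restrict (Icc α β)), u' t = (w t).toReal :=
      ae_restrict_of_ae_restrict_of_subset (hsubIcc hα hβ) hae
    have haev : ∀ᵐ t ∂(volume.restrict (Icc α β)), v t = u t := by
      filter_upwards [ae_restrict_mem measurableSet_Icc] with t ht
      exact hveq t (hsubIcc hα hβ ht)
    have hint2 : Integrable (fun t => f (v t))
        ((volume.restrict (Icc α β)).withDensity (fun t => ((w0 t : ℝ≥0) : ℝ≥0∞))) := by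
      rw [hwd0 _ measurableSet_Icc]; exact hcomp
    have hw0ae : AEMeasurable w0 (volume.restrict (Icc α β)) := hw0meas.aemeasurable
    have hint3 : Integrable (fun t => (w0 t : ℝ) • f (v t)) (volume.restrict (Icc α β)) :=
      (integrable_withDensity_iff_integrable_coe_smul₀ hw0ae).1 hint2
    have hcongr : ∀ᵐ t ∂(volume.restrict (Icc α β)),
        (w0 t : ℝ) • f (v t) = f (u t) * u' t := by
      filter_upwards [hae', haev] with t h1 h2
      rw [h2, smul_eq_mul, mul_comm, h1]
      rfl
    refine ⟨?_, (integrable_congr hcongr).1 hint3⟩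
    calc (∫ x in Icc (v α) (v β), f x)
        = ∫ x, f x ∂(Measure.map v (μ.restrict (Icc α β))) := by rw [hmap]
      _ = ∫ t, f (v t) ∂(μ.restrict (Icc α β)) :=
          integral_map hvcont.measurable.aemeasurable hfi.aestronglyMeasurable
      _ = ∫ t, f (v t)
            ∂((volume.restrict (Icc α β)).withDensity (fun t => ((w0 t : ℝ≥0) : ℝ≥0∞))) := by
          rw [hwd0 _ measurableSet_Icc]
      _ = ∫ t, w0 t • f (v t) ∂(volume.restrict (Icc α β)) :=
          integral_withDensity_eq_integral_smul₀ hw0ae _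
      _ = ∫ t in Icc α β, f (u t) * u' t := integral_congr_ae hcongr
  refine ⟨(hkey a ⟨le_rfl, hab⟩ b ⟨hab, le_rfl⟩ hab).2, ?_⟩
  have hord : ∀ α ∈ Icc a b, ∀ β ∈ Icc a b, α ≤ β →
      (∫ x in u α..u β, f x) = ∫ t in α..β, f (u t) * u' t := by
    intro α hα β hβ hαβ
    have huv : u α ≤ u β := hmono hα hβ hαβ
    rw [intervalIntegral.integral_of_le huv, intervalIntegral.integral_of_le hαβ,
      ← integral_Icc_eq_integral_Ioc, ← integral_Icc_eq_integral_Ioc,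
      ← hveq α hα, ← hveq β hβ]
    exact (hkey α hα β hβ hαβ).1
  intro α hα β hβ
  rcases le_total α β with h | h
  · exact hord α hα β hβ h
  · have hh := hord β hβ α hα h
    rw [intervalIntegral.integral_symm (u β) (u α), hh, ← intervalIntegral.integral_symm β α]

end Main

end CoVAux

end CoV


/-- Change of variable (alternate form I): if `f` is Lebesgue integrable over `[c,d]`
and `u : [a,b] → [c,d]` is monotone and absolutely continuous (with a.e. derivative
`u'`), then `(f ∘ u)·u'` is Lebesgue integrable over `[a,b]` and
`∫_{u α}^{u β} f = ∫_α^β f(u t) u'(t) dt` for all `α, β ∈ [a,b]`. -/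
theorem change_of_variable_monotone_ac (a b c d : ℝ) (f u u' : ℝ → ℝ)
    (hf : IntegrableOn f (Icc c d) volume)
    (hmaps : MapsTo u (Icc a b) (Icc c d))
    (hmono : MonotoneOn u (Icc a b) ∨ AntitoneOn u (Icc a b))
    (hAC : AbsolutelyContinuousOn u a b)
    (hu : ∀ᵐ t ∂(volume.restrict (Icc a b)), HasDerivWithinAt u (u' t) (Icc a b) t) :
    IntegrableOn (fun t => f (u t) * u' t) (Icc a b) volume ∧
      ∀ α ∈ Icc a b, ∀ β ∈ Icc a b,
        (∫ x in u α..u β, f x) = ∫ t in α..β, f (u t) * u' t := by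
  by_cases hab : a ≤ b
  swap
  · rw [Icc_eq_empty hab]
    exact ⟨integrableOn_empty, fun α hα => absurd hα (notMem_empty α)⟩
  rcases hmono with hm | ha
  · exact CoVAux.main_mono a b c d f u u' hab hf hmaps hm hAC hu
  · -- antitone case: reflect
    set r : ℝ → ℝ := fun t => a + b - t with hr
    have hrmeas : Measurable r := measurable_const.sub measurable_id
    have hrmem : ∀ {t : ℝ}, t ∈ Icc a b → r t ∈ Icc a b := fun {t} ht =>
      ⟨by simp only [hr]; linarith [ht.2], by simp only [hr]; linarith [ht.1]⟩
    have hrr : ∀ t, r (r t) = t := fun t => by simp only [hr]; ring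
    set U : ℝ → ℝ := fun t => u (r t) with hU
    set U' : ℝ → ℝ := fun t => -u' (r t) with hU'
    have hUmaps : MapsTo U (Icc a b) (Icc c d) := fun t ht => hmaps (hrmem ht)
    have hUmono : MonotoneOn U (Icc a b) := fun s hs t ht hst =>
      ha (hrmem ht) (hrmem hs) (by simp only [hr]; linarith)
    have hUAC : AbsolutelyContinuousOn U a b := by
      intro ε hε
      obtain ⟨δ, hδ, hACδ⟩ := hAC ε hε
      refine ⟨δ, hδ, fun n x y hxy hdis hsum => ?_⟩
      have key := hACδ n (fun i => r (y i)) (fun i => r (x i))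
        (fun i => ⟨by simp only [hr]; linarith [(hxy i).2.2],
          by simp only [hr]; linarith [(hxy i).2.1], by simp only [hr]; linarith [(hxy i).1]⟩)
        (fun i j hij => by
          have hd := hdis i j hij
          rw [Set.disjoint_left] at hd ⊢
          intro z hz1 hz2
          have hz1' : r z ∈ Ioo (x i) (y i) := by
            simp only [hr, mem_Ioo] at hz1 ⊢
            constructor <;> linarith [hz1.1, hz1.2]
          have hz2' : r z ∈ Ioo (x j) (y j) := by
            simp only [hr, mem_Ioo] at hz2 ⊢
            constructor <;> linarith [hz2.1, hz2.2]
          exact hd hz1' hz2')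
        (by
          refine lt_of_le_of_lt (le_of_eq (Finset.sum_congr rfl fun i _ => ?_)) hsum
          simp only [hr]; ring)
      refine lt_of_le_of_lt (le_of_eq (Finset.sum_congr rfl fun i _ => ?_)) key
      rw [hU]
      simp only
      exact abs_sub_comm _ _
    have hUderiv : ∀ᵐ t ∂(volume.restrict (Icc a b)),
        HasDerivWithinAt U (U' t) (Icc a b) t := by
      have h0 : volume ({t : ℝ | ¬ HasDerivWithinAt u (u' t) (Icc a b) t} ∩ Icc a b) = 0 := by
        rw [← Measure.restrict_apply' measurableSet_Icc]
        exact ae_iff.1 hu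
      obtain ⟨N, hNsub, hNmeas, hNnull⟩ := exists_measurable_superset_of_null h0
      have hmapr : Measure.map r volume = volume := by
        have hreq : r = (fun t : ℝ => (a + b) + t) ∘ (fun t : ℝ => -t) :=
          funext fun t => by simp [hr]; ring
        rw [hreq, ← Measure.map_map (measurable_const_add _) measurable_neg,
          Measure.map_neg_eq_self]
        exact Measure.IsAddLeftInvariant.map_add_left_eq_self (a + b)
      have hpre : volume (r ⁻¹' N) = 0 := by
        rw [← Measure.map_apply hrmeas hNmeas, hmapr]
        exact hNnull
      rw [ae_iff, Measure.restrict_apply' measurableSet_Icc]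
      refine measure_mono_null ?_ hpre
      intro z hz
      simp only [mem_inter_iff, mem_setOf_eq] at hz
      by_contra hzN
      apply hz.1
      have hprz : HasDerivWithinAt u (u' (r z)) (Icc a b) (r z) := by
        by_contra hnp
        exact hzN (hNsub ⟨hnp, hrmem hz.2⟩)
      have hrd : HasDerivWithinAt r (-1) (Icc a b) z := by
        have : HasDerivAt r (-1) z := by
          simpa using (hasDerivAt_id z).const_sub (a + b)
        exact this.hasDerivWithinAt
      have hcomp := hprz.comp z hrd (fun s hs => hrmem hs)
      have : U' z = u' (r z) * (-1) := by rw [hU']; simp only; ring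
      rw [this]
      exact hcomp
    obtain ⟨hUint, hUeq⟩ := CoVAux.main_mono a b c d f U U' hab hf hUmaps hUmono hUAC hUderiv
    have hmaprst : Measure.map r (volume.restrict (Icc a b)) = volume.restrict (Icc a b) := by
      have hmapr : Measure.map r volume = volume := by
        have hreq : r = (fun t : ℝ => (a + b) + t) ∘ (fun t : ℝ => -t) :=
          funext fun t => by simp [hr]; ring
        rw [hreq, ← Measure.map_map (measurable_const_add _) measurable_neg,
          Measure.map_neg_eq_self]
        exact Measure.IsAddLeftInvariant.map_add_left_eq_self (a + b)
      have hpre : r ⁻¹' Icc a b = Icc a b := by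
        ext z
        simp only [mem_preimage, mem_Icc, hr]
        constructor <;> intro h <;> constructor <;> linarith [h.1, h.2]
      calc Measure.map r (volume.restrict (Icc a b))
          = Measure.map r (volume.restrict (r ⁻¹' Icc a b)) := by rw [hpre]
        _ = (volume.map r).restrict (Icc a b) :=
            (Measure.restrict_map hrmeas measurableSet_Icc).symm
        _ = volume.restrict (Icc a b) := by rw [hmapr]
    constructor
    · have h1 : Integrable (fun t => f (U t) * U' t)
          (Measure.map r (volume.restrict (Icc a b))) := by
        rw [hmaprst]; exact hUint
      have h2 := (integrable_map_measure
        (by rw [hmaprst]; exact hUint.aestronglyMeasurable) hrmeas.aemeasurable).1 h1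
      have h3 : (fun t => f (u t) * u' t)
          = fun t => -(((fun s => f (U s) * U' s) ∘ r) t) := by
        funext t
        simp only [Function.comp_apply, hU, hU', hrr]
        ring
      rw [h3]
      exact h2.neg
    · intro α hα β hβ
      have h1 := hUeq (r α) (hrmem hα) (r β) (hrmem hβ)
      have hUα : U (r α) = u α := by rw [hU]; simp only; rw [hrr]
      have hUβ : U (r β) = u β := by rw [hU]; simp only; rw [hrr]
      rw [hUα, hUβ] at h1
      rw [h1]
      have h2 := intervalIntegral.integral_comp_sub_left (a := α) (b := β)
        (fun t => f (U t) * U' t) (a + b)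
      have hrα : a + b - α = r α := rfl
      have hrβ : a + b - β = r β := rfl
      rw [hrα, hrβ] at h2
      have h3 : ∀ x : ℝ, f (U (a + b - x)) * U' (a + b - x) = -(f (u x) * u' x) := by
        intro x
        have hx : a + b - x = r x := rfl
        rw [hx]
        simp only [hU, hU', hrr]
        ring
      calc (∫ t in r α..r β, f (U t) * U' t)
          = -∫ t in r β..r α, f (U t) * U' t := by
            rw [intervalIntegral.integral_symm]
        _ = -∫ x in α..β, f (U (a + b - x)) * U' (a + b - x) := by rw [h2]
        _ = -∫ x in α..β, -(f (u x) * u' x) := by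
            congr 1
            exact intervalIntegral.integral_congr fun x _ => h3 x
        _ = ∫ x in α..β, f (u x) * u' x := by
            rw [intervalIntegral.integral_neg, neg_neg]
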